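/- arXiv:2011.05557 — 4 statements merged into one kernel-verified Lean document; each statement's English description precedes it below -/
import Mathlib

section
/- Let G be a complete mixed graph (every pair of distinct vertices joined by exactly one edge, either directed or undirected). Define a directed cycle of G to be a cycle containing at least one directed edge whose undirected edges can be oriented so that all edges are consistently directed around the cycle. Then G contains a directed cycle if and only if G contains a directed triangle (a directed cycle of length 3). -/
/-- A cycle of a mixed graph: a cyclic sequence of at least 3 distinct vertices
where each consecutive edge is either directed forward or undirected, with at
least one directed edge. -/
def HasDirCycle {V : Type*} (dir und : V → V → Prop) : Prop :=
  ∃ (n : ℕ), 3 ≤ n ∧ ∃ f : ZMod n → V, Function.Injective f ∧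
    (∀ i : ZMod n, dir (f i) (f (i + 1)) ∨ und (f i) (f (i + 1))) ∧
    (∃ i : ZMod n, dir (f i) (f (i + 1)))

/-- A directed triangle of a mixed graph. -/
def HasDirTriangle {V : Type*} (dir und : V → V → Prop) : Prop :=
  ∃ a b c : V, a ≠ b ∧ b ≠ c ∧ a ≠ c ∧
    (dir a b ∨ und a b) ∧ (dir b c ∨ und b c) ∧ (dir c a ∨ und c a) ∧
    (dir a b ∨ dir b c ∨ dir c a)

private lemma castinj {n a b : ℕ} [NeZero n] (ha : a < n) (hb : b < n)
    (h : (a : ZMod n) = b) : a = b := by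
  have := congrArg ZMod.val h
  rwa [ZMod.val_cast_of_lt ha, ZMod.val_cast_of_lt hb] at this

private lemma cycle_to_triangle {V : Type*} (dir und : V → V → Prop)
    (hundsymm : ∀ u v, und u v → und v u)
    (hcomplete : ∀ u v : V, u ≠ v →
      (dir u v ∧ ¬ dir v u ∧ ¬ und u v) ∨
      (dir v u ∧ ¬ dir u v ∧ ¬ und u v) ∨
      (und u v ∧ ¬ dir u v ∧ ¬ dir v u)) :
    ∀ n : ℕ, 3 ≤ n → ∀ f : ZMod n → V, Function.Injective f →
      (∀ i : ZMod n, dir (f i) (f (i + 1)) ∨ und (f i) (f (i + 1))) →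
      (∃ i : ZMod n, dir (f i) (f (i + 1))) → HasDirTriangle dir und := by
  intro n
  induction n using Nat.strong_induction_on with
  | _ n ih =>
  intro hn f hinj hedge hdir
  obtain ⟨i₀, hi₀⟩ := hdir
  haveI : NeZero n := ⟨by omega⟩
  -- rotate so that the directed edge is at index 0
  set g : ZMod n → V := fun j => f (j + i₀) with hg
  have ginj : Function.Injective g := fun a b h => by
    have := hinj h; exact add_right_cancel this
  have gedge : ∀ j, dir (g j) (g (j + 1)) ∨ und (g j) (g (j + 1)) := by
    intro j
    have := hedge (j + i₀)
    simpa [hg, add_right_comm] using this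
  have g01 : dir (g 0) (g 1) := by
    simpa [hg, add_comm] using hi₀
  -- numeral facts
  have cast2 : ((2 : ℕ) : ZMod n) = (2 : ZMod n) := by norm_cast
  have ne01 : (0 : ZMod n) ≠ 1 := by
    intro h
    have : (0 : ℕ) = 1 := castinj (n := n) (by omega) (by omega) (by exact_mod_cast h)
    omega
  have ne12 : (1 : ZMod n) ≠ 2 := by
    intro h
    have : (1 : ℕ) = 2 := castinj (n := n) (by omega) (by omega) (by exact_mod_cast h)
    omega
  have ne02 : (0 : ZMod n) ≠ 2 := by
    intro h
    have : (0 : ℕ) = 2 := castinj (n := n) (by omega) (by omega) (by exact_mod_cast h)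
    omega
  have e12 : dir (g 1) (g 2) ∨ und (g 1) (g 2) := by
    have := gedge 1
    norm_num at this
    exact this
  rcases hcomplete (g 0) (g 2) (fun h => ne02 (ginj h)) with ⟨h02, -, -⟩ | ⟨h20, -, -⟩ | ⟨hu, -, -⟩
  · -- dir (g 0) (g 2): shortcut, skipping g 1
    rcases Nat.lt_or_ge n 4 with h4 | h4
    · -- n = 3 : the cycle itself is a triangle
      interval_cases n
      refine ⟨g 0, g 1, g 2, fun h => ne01 (ginj h), fun h => ne12 (ginj h),
        fun h => ne02 (ginj h), ?_, e12, ?_, Or.inl g01⟩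
      · have := gedge 0
        rwa [zero_add] at this
      · have := gedge 2
        rwa [show (2 + 1 : ZMod 3) = 0 from by decide] at this
    · set m := n - 1 with hm
      haveI : NeZero m := ⟨by omega⟩
      haveI : Fact (1 < m) := ⟨by omega⟩
      have hval1 : (1 : ZMod m).val = 1 := ZMod.val_one m
      set emb : ZMod m → ZMod n := fun j => if j = 0 then 0 else ((j.val + 1 : ℕ) : ZMod n)
        with hemb
      have emb0 : emb 0 = 0 := by simp [hemb]
      have embne : ∀ j : ZMod m, j ≠ 0 → emb j = ((j.val + 1 : ℕ) : ZMod n) := by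
        intro j hj; simp [hemb, hj]
      have one_ne : (1 : ZMod m) ≠ 0 := by
        intro hc
        have := congrArg ZMod.val hc
        simp [hval1] at this
      have emb1 : emb 1 = (2 : ZMod n) := by
        rw [embne 1 one_ne, hval1, ← cast2]
      have embinj : Function.Injective emb := by
        intro a b h
        by_cases ha : a = 0 <;> by_cases hb : b = 0
        · rw [ha, hb]
        · exfalso
          rw [ha, emb0, embne b hb] at h
          have hbv := ZMod.val_lt b
          have : (0 : ℕ) = b.val + 1 :=
            castinj (n := n) (by omega) (by omega) (by rw [Nat.cast_zero]; exact h)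
          omega
        · exfalso
          rw [hb, emb0, embne a ha] at h
          have hav := ZMod.val_lt a
          have : a.val + 1 = 0 := by
            apply castinj (n := n) (by omega) (by omega); exact_mod_cast h
          omega
        · rw [embne a ha, embne b hb] at h
          have hav := ZMod.val_lt a
          have hbv := ZMod.val_lt b
          have : a.val + 1 = b.val + 1 := castinj (n := n) (by omega) (by omega) h
          exact ZMod.val_injective m (by omega)
      set h : ZMod m → V := fun j => g (emb j) with hh
      have hinj' : Function.Injective h := ginj.comp embinj
      have hedge' : ∀ j : ZMod m, dir (h j) (h (j + 1)) ∨ und (h j) (h (j + 1)) := by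
        intro j
        show dir (g (emb j)) (g (emb (j + 1))) ∨ und (g (emb j)) (g (emb (j + 1)))
        by_cases hj : j = 0
        · subst hj
          rw [zero_add, emb0, emb1]
          exact Or.inl h02
        · have hjv := ZMod.val_lt j
          have hjv0 : j.val ≠ 0 := fun hc => hj ((ZMod.val_eq_zero j).mp hc)
          by_cases hj1 : j + 1 = 0
          · -- last step: j.val + 1 = m
            have hjm : j.val + 1 = m := by
              by_contra hc
              have hlt : j.val + (1 : ZMod m).val < m := by omega
              have := ZMod.val_add_of_lt hlt
              rw [hj1] at this
              simp [hval1] at this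
            rw [hj1, emb0, embne j hj, hjm]
            have := gedge ((m : ℕ) : ZMod n)
            have hm0 : ((m : ℕ) : ZMod n) + 1 = 0 := by
              have h1 : ((m : ℕ) : ZMod n) + 1 = ((m + 1 : ℕ) : ZMod n) := by push_cast; ring
              have h2 : m + 1 = n := by omega
              rw [h1, h2, ZMod.natCast_self]
            rwa [hm0] at this
          · -- middle step
            have hjm : j.val + 1 < m := by
              rcases Nat.lt_or_ge (j.val + 1) m with h' | h'
              · exact h'
              · exfalso
                apply hj1
                have hlt : j.val + (1 : ZMod m).val = m := by omega
                have hmod : (j + 1).val = (j.val + (1 : ZMod m).val) % m := ZMod.val_add j 1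
                rw [hlt, Nat.mod_self] at hmod
                exact (ZMod.val_eq_zero _).mp hmod
            have hval : (j + 1).val = j.val + 1 := by
              rw [ZMod.val_add_of_lt (by omega), hval1]
            rw [embne j hj, embne (j + 1) hj1, hval]
            have := gedge ((j.val + 1 : ℕ) : ZMod n)
            have heq : ((j.val + 1 : ℕ) : ZMod n) + 1 = ((j.val + 1 + 1 : ℕ) : ZMod n) := by
              push_cast; ring
            rwa [heq] at this
      have hdir' : ∃ j : ZMod m, dir (h j) (h (j + 1)) := by
        refine ⟨0, ?_⟩
        show dir (g (emb 0)) (g (emb (0 + 1)))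
        rw [zero_add, emb0, emb1]
        exact h02
      exact ih m (by omega) (by omega) h hinj' hedge' hdir'
  · exact ⟨g 0, g 1, g 2, fun h => ne01 (ginj h), fun h => ne12 (ginj h),
      fun h => ne02 (ginj h), Or.inl g01, e12, Or.inl h20, Or.inl g01⟩
  · exact ⟨g 0, g 1, g 2, fun h => ne01 (ginj h), fun h => ne12 (ginj h),
      fun h => ne02 (ginj h), Or.inl g01, e12, Or.inr (hundsymm _ _ hu), Or.inl g01⟩

/-- A complete mixed graph contains a directed cycle iff it contains a directed
triangle. -/
theorem mixed_graph_directed_cycle_iff_directed_triangle {V : Type*} [Fintype V]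
    (dir und : V → V → Prop)
    (hundsymm : ∀ u v, und u v → und v u)
    (hcomplete : ∀ u v : V, u ≠ v →
      (dir u v ∧ ¬ dir v u ∧ ¬ und u v) ∨
      (dir v u ∧ ¬ dir u v ∧ ¬ und u v) ∨
      (und u v ∧ ¬ dir u v ∧ ¬ dir v u)) :
    HasDirCycle dir und ↔ HasDirTriangle dir und := by
  constructor
  · rintro ⟨n, hn, f, hinj, hedge, hdir⟩
    exact cycle_to_triangle dir und hundsymm hcomplete n hn f hinj hedge hdir
  · rintro ⟨a, b, c, hab, hbc, hac, eab, ebc, eca, hd⟩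
    refine ⟨3, le_refl 3, ?_⟩
    set f : ZMod 3 → V := fun i => if i = 0 then a else if i = 1 then b else c with hf
    have f0 : f 0 = a := by simp [hf]
    have f1 : f 1 = b := by
      simp [hf, show (1 : ZMod 3) ≠ 0 from by decide]
    have f2 : f 2 = c := by
      simp [hf, show (2 : ZMod 3) ≠ 0 from by decide, show (2 : ZMod 3) ≠ 1 from by decide]
    have tri : ∀ i : ZMod 3, i = 0 ∨ i = 1 ∨ i = 2 := by decide
    have s01 : (0 : ZMod 3) + 1 = 1 := by decide
    have s12 : (1 : ZMod 3) + 1 = 2 := by decide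
    have s20 : (2 : ZMod 3) + 1 = 0 := by decide
    refine ⟨f, ?_, ?_, ?_⟩
    · intro x y h
      rcases tri x with rfl | rfl | rfl <;> rcases tri y with rfl | rfl | rfl <;>
        simp only [f0, f1, f2] at h <;>
        first
          | rfl
          | exact absurd h hab | exact absurd h.symm hab
          | exact absurd h hbc | exact absurd h.symm hbc
          | exact absurd h hac | exact absurd h.symm hac
    · intro i
      rcases tri i with rfl | rfl | rfl
      · rw [s01, f0, f1]; exact eab
      · rw [s12, f1, f2]; exact ebc
      · rw [s20, f2, f0]; exact eca
    · rcases hd with h | h | h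
      · exact ⟨0, by rw [s01, f0, f1]; exact h⟩
      · exact ⟨1, by rw [s12, f1, f2]; exact h⟩
      · exact ⟨2, by rw [s20, f2, f0]; exact h⟩
end

section
/- Let G be a complete mixed graph with no directed cycle. If vertices a and b are joined by an undirected edge, then for every other vertex c, the edges (a,c) and (b,c) have the same 'type': either both are directed toward c, both are directed away from c, or both are undirected. -/
lemma triCycle {V : Type*} (dir und : V → V → Prop) (x y z : V)
    (hxy : x ≠ y) (hyz : y ≠ z) (hxz : x ≠ z)
    (h1 : dir x y) (h2 : dir y z ∨ und y z) (h3 : dir z x ∨ und z x) :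
    HasDirCycle dir und := by
  refine ⟨3, le_refl 3, (fun i : ZMod 3 => ![x, y, z] i), ?_, ?_, ⟨0, ?_⟩⟩
  · intro i j h
    fin_cases i <;> fin_cases j <;> simp_all <;> rfl
  · intro i
    fin_cases i <;> simp <;> first | exact Or.inl h1 | exact h2 | exact h3
  · simpa using h1

/-- In a complete mixed graph with no directed cycle, two vertices joined by an
undirected edge have the same edge type towards any third vertex. -/
theorem undirected_edge_same_type {V : Type*} [Fintype V]
    (dir und : V → V → Prop)
    (hundsymm : ∀ u v, und u v → und v u)
    (hcomplete : ∀ u v : V, u ≠ v →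
      (dir u v ∧ ¬ dir v u ∧ ¬ und u v) ∨
      (dir v u ∧ ¬ dir u v ∧ ¬ und u v) ∨
      (und u v ∧ ¬ dir u v ∧ ¬ dir v u))
    (hnocyc : ¬ HasDirCycle dir und)
    (a b : V) (hab : a ≠ b) (hund : und a b)
    (c : V) (hca : c ≠ a) (hcb : c ≠ b) :
    (dir a c ↔ dir b c) ∧ (dir c a ↔ dir c b) ∧ (und a c ↔ und b c) := by
  have hba : b ≠ a := hab.symm
  have hac : a ≠ c := hca.symm
  have hbc : b ≠ c := hcb.symm
  have hundba : und b a := hundsymm a b hund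
  rcases hcomplete a c hac with ⟨h1, h2, h3⟩ | ⟨h1, h2, h3⟩ | ⟨h1, h2, h3⟩ <;>
  rcases hcomplete b c hbc with ⟨g1, g2, g3⟩ | ⟨g1, g2, g3⟩ | ⟨g1, g2, g3⟩
  · tauto
  · exact absurd (triCycle dir und a c b hac hcb hab h1 (Or.inl g1) (Or.inr hundba)) hnocyc
  · exact absurd (triCycle dir und a c b hac hcb hab h1 (Or.inr (hundsymm b c g1)) (Or.inr hundba)) hnocyc
  · exact absurd (triCycle dir und b c a hbc hca hba g1 (Or.inl h1) (Or.inr hund)) hnocyc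
  · tauto
  · exact absurd (triCycle dir und c a b hca hab hcb h1 (Or.inr hund) (Or.inr g1)) hnocyc
  · exact absurd (triCycle dir und b c a hbc hca hba g1 (Or.inr (hundsymm a c h1)) (Or.inr hund)) hnocyc
  · exact absurd (triCycle dir und c b a hcb hba hca g1 (Or.inr hundba) (Or.inr h1)) hnocyc
  · tauto
end

section
/- Let R be a complete asymmetric relation on a finite set V together with an equivalence-like symmetric relation E (i.e., for each pair of distinct vertices exactly one of u→v, v→u, or u~v holds). If the associated complete mixed graph has no directed cycle, then the relation ~ (extended with reflexivity) is an equivalence relation, and the directed edges descend to a strict total order on the equivalence classes. -/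
/-- No directed triangle in a mixed graph with no directed cycle. -/
lemma no_dir_triangle {V : Type*} (dir sim : V → V → Prop) (hnocyc : ¬ HasDirCycle dir sim)
    {a b c : V} (hab : a ≠ b) (hbc : b ≠ c) (hca : c ≠ a)
    (e1 : dir a b ∨ sim a b) (e2 : dir b c ∨ sim b c) (e3 : dir c a ∨ sim c a)
    (hd : dir a b ∨ dir b c ∨ dir c a) : False := by
  apply hnocyc
  have h20 : (2 : ZMod 3) ≠ 0 := by decide
  have h21 : (2 : ZMod 3) ≠ 1 := by decide
  have h10 : (1 : ZMod 3) ≠ 0 := by decide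
  have h01 : (0 : ZMod 3) + 1 = 1 := by decide
  have h12 : (1 : ZMod 3) + 1 = 2 := by decide
  have h22 : (2 : ZMod 3) + 1 = 0 := by decide
  refine ⟨3, le_refl 3, fun i => if i = 0 then a else if i = 1 then b else c, ?_, ?_, ?_⟩
  · intro x y hxy
    have key : ∀ i : ZMod 3, i = 0 ∨ i = 1 ∨ i = 2 := by decide
    rcases key x with rfl | rfl | rfl <;> rcases key y with rfl | rfl | rfl <;> simp_all [h20, h21, h10]
  · intro i
    fin_cases i <;>
      simp only [show ((0:ZMod 3) = 0) from rfl, h01, h12, h22, if_pos, if_neg h10,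
        if_neg h20, if_neg h21, if_true, if_pos rfl] <;>
      assumption
  · rcases hd with h | h | h
    · exact ⟨0, by simpa [h01, h10] using h⟩
    · exact ⟨1, by simpa [h12, h10, h20, h21] using h⟩
    · exact ⟨2, by simpa [h22, h20, h21] using h⟩

/-- If the complete mixed graph associated to a relation system (u→v, v→u, or
u~v for each pair of distinct vertices) has no directed cycle, then ~ extended
with reflexivity is an equivalence relation and the directed edges descend to
a strict total order on the equivalence classes. -/
theorem no_directed_cycle_gives_order_on_classes {V : Type*} [Fintype V]
    (dir sim : V → V → Prop)
    (hsimm : ∀ u v, sim u v → sim v u)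
    (hdirr : ∀ v, ¬ dir v v)
    (hcomplete : ∀ u v : V, u ≠ v →
      (dir u v ∧ ¬ dir v u ∧ ¬ sim u v) ∨
      (dir v u ∧ ¬ dir u v ∧ ¬ sim u v) ∨
      (sim u v ∧ ¬ dir u v ∧ ¬ dir v u))
    (hnocyc : ¬ HasDirCycle dir sim) :
    Equivalence (fun u v : V => u = v ∨ sim u v) ∧
    (∀ a a' b b' : V, (a = a' ∨ sim a a') → (b = b' ∨ sim b b') →
      (dir a b ↔ dir a' b')) ∧
    (∀ a b c : V, dir a b → dir b c → dir a c) ∧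
    (∀ a b : V, dir a b → ¬ dir b a) ∧
    (∀ a b : V, ¬ (a = b ∨ sim a b) → dir a b ∨ dir b a) := by
  have tri := fun {a b c : V} => no_dir_triangle dir sim hnocyc (a := a) (b := b) (c := c)
  -- asymmetry
  have asym : ∀ a b : V, dir a b → ¬ dir b a := by
    intro a b hab hba
    by_cases h : a = b
    · exact hdirr a (h ▸ hab)
    · rcases hcomplete a b h with ⟨_, h2, _⟩ | ⟨_, h2, _⟩ | ⟨_, h2, _⟩
      · exact h2 hba
      · exact h2 hab
      · exact h2 hab
  -- dir implies not sim
  have dirnsim : ∀ a b : V, dir a b → ¬ sim a b := by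
    intro a b hab hs
    by_cases h : a = b
    · exact hdirr a (h ▸ hab)
    · rcases hcomplete a b h with ⟨_, _, h3⟩ | ⟨_, h2, _⟩ | ⟨_, h2, _⟩
      · exact h3 hs
      · exact h2 hab
      · exact h2 hab
  -- descent in the left coordinate
  have dL : ∀ a a' b : V, dir a b → sim a a' → dir a' b := by
    intro a a' b hab hs
    by_cases haa : a = a'
    · exact haa ▸ hab
    by_cases hba : b = a'
    · exact absurd (hba ▸ hab) (fun h => dirnsim a a' h hs)
    have hab' : a ≠ b := fun h => hdirr a (h ▸ hab)
    by_cases h : dir a' b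
    · exact h
    rcases hcomplete a' b (Ne.symm hba) with ⟨h1, _, _⟩ | ⟨h1, _, _⟩ | ⟨h1, _, _⟩
    · exact h1
    · exact absurd (tri hab' hba (fun h => haa h.symm) (Or.inl hab) (Or.inl h1)
        (Or.inr (hsimm a a' hs)) (Or.inl hab)) id
    · exact absurd (tri hab' hba (fun h => haa h.symm) (Or.inl hab)
        (Or.inr (hsimm a' b h1)) (Or.inr (hsimm a a' hs)) (Or.inl hab)) id
  -- descent in the right coordinate
  have dR : ∀ a b b' : V, dir a b → sim b b' → dir a b' := by
    intro a b b' hab hs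
    by_cases hbb : b = b'
    · exact hbb ▸ hab
    by_cases hab' : a = b'
    · exact absurd (hsimm b b' hs) (dirnsim b' b (hab' ▸ hab))
    have hanb : a ≠ b := fun h => hdirr a (h ▸ hab)
    by_cases h : dir a b'
    · exact h
    rcases hcomplete a b' hab' with ⟨h1, _, _⟩ | ⟨h1, _, _⟩ | ⟨h1, _, _⟩
    · exact h1
    · exact absurd (tri hanb hbb (fun h => hab' h.symm) (Or.inl hab) (Or.inr hs)
        (Or.inl h1) (Or.inl hab)) id
    · exact absurd (tri hanb hbb (fun h => hab' h.symm) (Or.inl hab) (Or.inr hs)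
        (Or.inr (hsimm a b' h1)) (Or.inl hab)) id
  -- sim extended with reflexivity is transitive
  have strans : ∀ a b c : V, (a = b ∨ sim a b) → (b = c ∨ sim b c) → (a = c ∨ sim a c) := by
    intro a b c hab hbc
    rcases hab with rfl | hab
    · exact hbc
    rcases hbc with rfl | hbc
    · exact Or.inr hab
    by_cases hac : a = c
    · exact Or.inl hac
    by_cases hab' : a = b
    · exact Or.inr (hab' ▸ hbc)
    by_cases hbc' : b = c
    · exact Or.inr (hbc' ▸ hab)
    right
    by_contra hns
    rcases hcomplete a c hac with ⟨h1, _, _⟩ | ⟨h1, _, _⟩ | ⟨h1, _, _⟩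
    · exact tri hac (Ne.symm hbc') (Ne.symm hab') (Or.inl h1) (Or.inr (hsimm b c hbc))
        (Or.inr (hsimm a b hab)) (Or.inl h1)
    · exact tri (Ne.symm hac) hab' hbc' (Or.inl h1) (Or.inr hab) (Or.inr hbc) (Or.inl h1)
    · exact hns h1
  -- one-directional descent along equivalence
  have desc : ∀ a a' b b' : V, (a = a' ∨ sim a a') → (b = b' ∨ sim b b') →
      dir a b → dir a' b' := by
    intro a a' b b' ha hb hd
    have h1 : dir a' b := by
      rcases ha with rfl | ha
      · exact hd
      · exact dL a a' b hd ha
    rcases hb with rfl | hb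
    · exact h1
    · exact dR a' b b' h1 hb
  refine ⟨⟨fun x => Or.inl rfl, ?_, fun {x y z} => strans x y z⟩, ?_, ?_, asym, ?_⟩
  · intro x y h
    rcases h with rfl | h
    · exact Or.inl rfl
    · exact Or.inr (hsimm x y h)
  · intro a a' b b' ha hb
    constructor
    · exact desc a a' b b' ha hb
    · refine desc a' a b' b ?_ ?_
      · rcases ha with rfl | ha
        · exact Or.inl rfl
        · exact Or.inr (hsimm a a' ha)
      · rcases hb with rfl | hb
        · exact Or.inl rfl
        · exact Or.inr (hsimm b b' hb)
  · intro a b c hab hbc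
    have hanb : a ≠ b := fun h => hdirr a (h ▸ hab)
    have hbnc : b ≠ c := fun h => hdirr b (h ▸ hbc)
    have hanc : a ≠ c := fun h => asym a b hab (h ▸ hbc)
    by_cases h : dir a c
    · exact h
    rcases hcomplete a c hanc with ⟨h1, _, _⟩ | ⟨h1, _, _⟩ | ⟨h1, _, _⟩
    · exact h1
    · exact absurd (tri hanb hbnc hanc.symm (Or.inl hab) (Or.inl hbc) (Or.inl h1)
        (Or.inl hab)) id
    · exact absurd (tri hanb hbnc hanc.symm (Or.inl hab) (Or.inl hbc)
        (Or.inr (hsimm a c h1)) (Or.inl hab)) id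
  · intro a b h
    push_neg at h
    rcases hcomplete a b h.1 with ⟨h1, _, _⟩ | ⟨h1, _, _⟩ | ⟨h1, _, _⟩
    · exact Or.inl h1
    · exact Or.inr h1
    · exact absurd h1 h.2
end

section
/- Let X be a finite set with |X| ≥ 2, and let R be a relation set on the unordered pairs of distinct points of X (assigning <, =, or > to each two pairs) whose auxiliary mixed graph contains no directed cycle. Then there exists a metric ρ on X that generates R. -/
lemma no3 {V : Type*} {dir und : V → V → Prop}
    (h : ¬ HasDirCycle dir und) {a b c : V}
    (hab : a ≠ b) (hbc : b ≠ c) (hac : a ≠ c)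
    (h1 : dir a c)
    (h2 : dir c b ∨ und c b)
    (h3 : dir b a ∨ und b a) : False := by
  apply h
  refine ⟨3, le_refl 3, ![a, c, b], ?_, ?_, ⟨0, ?_⟩⟩
  · intro i j hij
    fin_cases i <;> fin_cases j <;> simp_all <;> rfl
  · intro i
    fin_cases i
    · exact Or.inl h1
    · exact h2
    · exact h3
  · exact h1

lemma key {V : Type*} [Fintype V] (R : V → V → Ordering)
    (hswap : ∀ v w, R w v = (R v w).swap)
    (hno3 : ∀ a b c : V, a ≠ b → b ≠ c → a ≠ c → R a c = .gt →
      (R c b = .gt ∨ R c b = .eq) → (R b a = .gt ∨ R b a = .eq) → False) :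
    ∃ g : V → ℝ, (∀ v, 0 ≤ g v ∧ g v < 1) ∧ ∀ v w, compare (g v) (g w) = R v w := by
  classical
  have hrefl : ∀ v, R v v = .eq := by
    intro v
    have h2 := hswap v v
    cases h : R v v <;> rw [h] at h2 <;> simp [Ordering.swap] at h2 <;> simp [h2] at h ⊢
  -- transitivity of (R · · ≠ gt)
  have htrans : ∀ a b c : V, R a b ≠ .gt → R b c ≠ .gt → R a c ≠ .gt := by
    intro a b c h1 h2 h3
    have hac : a ≠ c := by rintro rfl; rw [hrefl] at h3; cases h3
    have hab : a ≠ b := by rintro rfl; exact h2 h3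
    have hbc : b ≠ c := by rintro rfl; exact h1 h3
    refine hno3 a b c hab hbc hac h3 ?_ ?_
    · have := hswap b c
      cases hx : R b c <;> rw [hx] at this <;> simp [Ordering.swap] at this <;> simp [this]
      exact absurd hx h2
    · have := hswap a b
      cases hx : R a b <;> rw [hx] at this <;> simp [Ordering.swap] at this <;> simp [this]
      exact absurd hx h1
  have hmono : ∀ v w u : V, R w v ≠ .gt → R w u = .gt → R v u = .gt := by
    intro v w u hwv hwu
    by_contra hvu
    exact (htrans w v u hwv hvu) hwu
  have hlt_ne : ∀ {v w : V}, R v w = .lt → R w v = .gt := by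
    intro v w h
    rw [hswap, h]; rfl
  have heq_ne : ∀ {v w : V}, R v w = .eq → R w v = .eq := by
    intro v w h
    rw [hswap, h]; rfl
  -- the rank function
  set f : V → ℕ := fun v => (Finset.univ.filter (fun u => R v u = Ordering.gt)).card with hf
  have hfeq : ∀ v w, R v w = .eq → f v = f w := by
    intro v w h
    have : (Finset.univ.filter (fun u => R v u = Ordering.gt)) =
        (Finset.univ.filter (fun u => R w u = Ordering.gt)) := by
      ext u
      simp only [Finset.mem_filter, Finset.mem_univ, true_and]
      constructor
      · intro hu; exact hmono w v u (by rw [h]; simp) hu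
      · intro hu; exact hmono v w u (by rw [heq_ne h]; simp) hu
    simp [hf, this]
  have hflt : ∀ v w, R v w = .gt → f w < f v := by
    intro v w h
    apply Finset.card_lt_card
    constructor
    · intro u hu
      simp only [Finset.mem_filter, Finset.mem_univ, true_and] at hu ⊢
      exact hmono v w u (by rw [hswap, h]; simp [Ordering.swap]) hu
    · intro hsub
      have := hsub (by simp [h] : w ∈ Finset.univ.filter (fun u => R v u = Ordering.gt))
      simp [hrefl w] at this
  -- build g
  set N : ℝ := (Fintype.card V : ℝ) + 1 with hN
  have hNpos : 0 < N := by positivity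
  refine ⟨fun v => (f v : ℝ) / N, ?_, ?_⟩
  · intro v
    constructor
    · exact div_nonneg (Nat.cast_nonneg _) hNpos.le
    · rw [div_lt_one hNpos]
      have : f v ≤ Fintype.card V := by
        simpa using Finset.card_filter_le Finset.univ (fun u => R v u = Ordering.gt)
      rw [hN]
      exact_mod_cast Nat.lt_succ_of_le this
  · intro v w
    simp only
    cases h : R v w
    · have := hflt w v (hlt_ne h)
      rw [compare_lt_iff_lt.mpr]
      exact div_lt_div_of_pos_right (by exact_mod_cast this) hNpos
    · rw [hfeq v w h, compare_eq_iff_eq.mpr rfl]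
    · have := hflt v w h
      rw [compare_gt_iff_gt.mpr]
      exact div_lt_div_of_pos_right (by exact_mod_cast this) hNpos

/-- If a relation set `R` on the unordered pairs of distinct points of a finite
set `X` (with exactly one of `<`, `=`, `>` between any two pairs) has an
auxiliary mixed graph with no directed cycle, then there is a metric `ρ` on `X`
generating `R`. -/
theorem no_directed_cycle_gives_generating_metric {X : Type*} [Fintype X]
    (hcard : 2 ≤ Fintype.card X)
    (R : Sym2 X → Sym2 X → Ordering)
    (hswap : ∀ v w : Sym2 X, R w v = (R v w).swap)
    (hnocyc : ¬ HasDirCycle (V := {e : Sym2 X // ¬ e.IsDiag})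
      (fun v w => R v.1 w.1 = Ordering.gt)
      (fun v w => v ≠ w ∧ R v.1 w.1 = Ordering.eq)) :
    ∃ ρ : X → X → ℝ,
      (∀ x y, ρ x y = ρ y x) ∧
      (∀ x y, ρ x y = 0 ↔ x = y) ∧
      (∀ x y z, ρ x z ≤ ρ x y + ρ y z) ∧
      (∀ p q r s : X, p ≠ q → r ≠ s →
        R s(p, q) s(r, s) = compare (ρ p q) (ρ r s)) := by
  classical
  set V := {e : Sym2 X // ¬ e.IsDiag}
  have hno3 : ∀ a b c : V, a ≠ b → b ≠ c → a ≠ c → R a.1 c.1 = .gt →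
      (R c.1 b.1 = .gt ∨ R c.1 b.1 = .eq) →
      (R b.1 a.1 = .gt ∨ R b.1 a.1 = .eq) → False := by
    intro a b c hab hbc hac h1 h2 h3
    refine no3 hnocyc hab hbc hac h1 ?_ ?_
    · rcases h2 with h | h
      · exact Or.inl h
      · exact Or.inr ⟨hbc.symm, h⟩
    · rcases h3 with h | h
      · exact Or.inl h
      · exact Or.inr ⟨hab.symm, h⟩
  obtain ⟨g, hg01, hgcmp⟩ := key (V := V) (fun v w => R v.1 w.1)
    (fun v w => hswap v.1 w.1) hno3
  set ρ : X → X → ℝ := fun x y =>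
    if h : x = y then 0
    else 1 + g ⟨s(x, y), by rw [Sym2.mk_isDiag_iff]; exact h⟩ with hρ
  have hnn : ∀ x y, 0 ≤ ρ x y := by
    intro x y
    simp only [hρ]
    by_cases h : x = y
    · simp [h]
    · rw [dif_neg h]
      linarith [(hg01 (⟨s(x, y), by rw [Sym2.mk_isDiag_iff]; exact h⟩ : V)).1]
  have hlb : ∀ x y, x ≠ y → 1 ≤ ρ x y := by
    intro x y h
    simp only [hρ]; rw [dif_neg h]
    linarith [(hg01 (⟨s(x, y), by rw [Sym2.mk_isDiag_iff]; exact h⟩ : V)).1]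
  have hub : ∀ x y, ρ x y < 2 := by
    intro x y
    simp only [hρ]
    by_cases h : x = y
    · simp [h]
    · rw [dif_neg h]
      linarith [(hg01 (⟨s(x, y), by rw [Sym2.mk_isDiag_iff]; exact h⟩ : V)).2]
  have hzero : ∀ x : X, ρ x x = 0 := by intro x; simp only [hρ]; simp
  refine ⟨ρ, ?_, ?_, ?_, ?_⟩
  · intro x y
    by_cases h : x = y
    · subst h; rfl
    · simp only [hρ]
      rw [dif_neg h, dif_neg (fun hh => h hh.symm)]
      congr 1
      exact congrArg g (Subtype.ext (Sym2.eq_swap))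
  · intro x y
    constructor
    · intro h
      by_contra hxy
      have := hlb x y hxy
      linarith
    · intro h; subst h; exact hzero x
  · intro x y z
    by_cases hxz : x = z
    · subst hxz
      rw [hzero]
      exact add_nonneg (hnn x y) (hnn y x)
    · by_cases hxy : x = y
      · subst hxy; rw [hzero, zero_add]
      · by_cases hyz : y = z
        · subst hyz; rw [hzero, add_zero]
        · have := hlb x y hxy
          have := hlb y z hyz
          have := hub x z
          linarith
  · intro p q r s hpq hrs
    simp only [hρ]
    rw [dif_neg hpq, dif_neg hrs]
    have hcomp : ∀ a b : ℝ, compare (1 + a) (1 + b) = compare a b := by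
      intro a b
      rcases lt_trichotomy a b with h | h | h
      · rw [compare_lt_iff_lt.mpr h, compare_lt_iff_lt.mpr (by linarith)]
      · rw [h, compare_eq_iff_eq.mpr rfl, compare_eq_iff_eq.mpr rfl]
      · rw [compare_gt_iff_gt.mpr h, compare_gt_iff_gt.mpr (by linarith)]
    rw [hcomp]
    exact (hgcmp ⟨s(p, q), by rw [Sym2.mk_isDiag_iff]; exact hpq⟩
      ⟨s(r, s), by rw [Sym2.mk_isDiag_iff]; exact hrs⟩).symm
end
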